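/- Let L ∈ Σ[∂] be monic of order n in normal form with constants C of characteristic zero, and let M be its level. Then the set F_M of constant solutions of the inhomogeneous system GD_{n,M}(L) is a single point {c_M}, and V_M, the constant-solution space of the homogeneous system hGD_{n,M}(L), is the one-dimensional space spanned by (c_M, 1). More generally, for any m not divisible by n, either F_m = ∅ or F_m = {c_m} + V_{m−1} is an affine space over V_{m−1}, and V_m = V_{m−1} ⊕ T_m with dim T_m ≤ 1. -/

import Mathlib

open scoped Classical
noncomputable section

variable {R : Type} [Ring R]

/-- Left multiplication by `a` as an additive endomorphism of `R`. -/
def mulOp (a : R) : AddMonoid.End R := AddMonoidHom.mulLeft a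

/-- The derivation as an additive endomorphism. -/
def derOp (d : R →+ R) : AddMonoid.End R := d

/-- `d` satisfies the Leibniz rule. -/
def IsDeriv (d : R →+ R) : Prop := ∀ a b : R, d (a * b) = d a * b + a * d b

/-- Additive group of differential operators of order at most `n`:
sums of terms `a · ∂^i` with `i ≤ n`. -/
def OpLE (d : R →+ R) (n : ℕ) : AddSubgroup (AddMonoid.End R) :=
  AddSubgroup.closure {P | ∃ (a : R) (i : ℕ), i ≤ n ∧ P = mulOp a * derOp d ^ i}

/-- `L` is a differential operator. -/
def IsOp (d : R →+ R) (L : AddMonoid.End R) : Prop := ∃ n, L ∈ OpLE d n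

/-- `L` is a differential operator of exact order `n`. -/
def HasOrd (d : R →+ R) (L : AddMonoid.End R) (n : ℕ) : Prop :=
  L ∈ OpLE d n ∧ ∀ k, L ∈ OpLE d k → n ≤ k

/-- `L` is a monic differential operator of order `n`. -/
def MonicOrd (d : R →+ R) (L : AddMonoid.End R) (n : ℕ) : Prop :=
  HasOrd d L n ∧ L - derOp d ^ n ∈ OpLE d (n - 1)

/-- The centralizer of `L` in the ring of differential operators. -/
def Cent (d : R →+ R) (L : AddMonoid.End R) : Set (AddMonoid.End R) :=
  {A | IsOp d A ∧ L * A = A * L}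

/-- Polynomials in `L` with constant coefficients. -/
def CPoly (d : R →+ R) (L : AddMonoid.End R) : Set (AddMonoid.End R) :=
  {P | ∃ p : Polynomial R, (∀ k, d (p.coeff k) = 0) ∧
      P = ∑ i ∈ Finset.range (p.natDegree + 1), mulOp (p.coeff i) * L ^ i}

/-- The level of `L`: smallest order of an element of `Z(L) \ C[L]`. -/
def Level (d : R →+ R) (L : AddMonoid.End R) (M : ℕ) : Prop :=
  (∃ Q ∈ Cent d L, Q ∉ CPoly d L ∧ HasOrd d Q M) ∧
  ∀ Q ∈ Cent d L, Q ∉ CPoly d L → ∀ q, HasOrd d Q q → M ≤ q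

/-- The index set `J_{n,m} = {1, ..., m} \\ nℤ`. -/
def Jset (n m : ℕ) : Finset ℕ := (Finset.range (m + 1)).filter (fun j => ¬ (n ∣ j))

/-- The operator `∑_{j ∈ J} c_j · B_j` associated to a coefficient vector `c`. -/
def theta {R : Type} [Ring R] (c : ℕ → R) (B : ℕ → AddMonoid.End R) (J : Finset ℕ) :
    AddMonoid.End R :=
  ∑ j ∈ J, mulOp (c j) * B j

/-- `V_m`: the constant solutions of the homogeneous system `hGD_{n,m}(L)`, i.e. the
constant coefficient vectors `c` supported on `J_{n,m}` such that
`∑_{j ∈ J_{n,m}} c_j B_j` commutes with `L`. -/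
def VmSet {R : Type} [Ring R] (d : R →+ R) (L : AddMonoid.End R)
    (B : ℕ → AddMonoid.End R) (n m : ℕ) : Set (ℕ → R) :=
  {c | (∀ j, d (c j) = 0) ∧ (∀ j ∉ Jset n m, c j = 0) ∧
       theta c B (Jset n m) ∈ Cent d L}

/-- `F_m`: the constant solutions of the inhomogeneous system `GD_{n,m}(L)`, i.e. the
constant coefficient vectors `c` supported on `J_{n,m−1}` such that
`B_m + ∑_{j ∈ J_{n,m−1}} c_j B_j` commutes with `L`. -/
def FmSet {R : Type} [Ring R] (d : R →+ R) (L : AddMonoid.End R)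
    (B : ℕ → AddMonoid.End R) (n m : ℕ) : Set (ℕ → R) :=
  {c | (∀ j, d (c j) = 0) ∧ (∀ j ∉ Jset n (m - 1), c j = 0) ∧
       B m + theta c B (Jset n (m - 1)) ∈ Cent d L}
open Finset
section Infra

variable {F : Type} [Field F]

@[simp] lemma mulOp_apply (a x : F) : mulOp a x = a * x := rfl

@[simp] lemma End_add_apply (f g : AddMonoid.End F) (x : F) : (f + g) x = f x + g x := rfl
@[simp] lemma End_neg_apply (f : AddMonoid.End F) (x : F) : (-f) x = -(f x) := rfl
@[simp] lemma End_sub_apply (f g : AddMonoid.End F) (x : F) : (f - g) x = f x - g x := rfl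
@[simp] lemma End_mul_apply (f g : AddMonoid.End F) (x : F) : (f * g) x = f (g x) := rfl
@[simp] lemma End_zero_apply (x : F) : (0 : AddMonoid.End F) x = 0 := rfl
@[simp] lemma End_one_apply (x : F) : (1 : AddMonoid.End F) x = x := rfl
@[simp] lemma End_sum_apply {ι : Type*} (s : Finset ι) (f : ι → AddMonoid.End F) (x : F) :
    (∑ i ∈ s, f i) x = ∑ i ∈ s, f i x := by
  classical
  induction s using Finset.induction with
  | empty => simp
  | @insert _ _ h ih => rw [Finset.sum_insert h, Finset.sum_insert h, End_add_apply, ih]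

lemma mulOp_add (a b : F) : mulOp (a + b) = mulOp a + mulOp b :=
  DFunLike.ext _ _ fun x => add_mul a b x

lemma mulOp_mul (a b : F) : mulOp (a * b) = mulOp a * mulOp b :=
  DFunLike.ext _ _ fun x => mul_assoc a b x

@[simp] lemma mulOp_zero : mulOp (0 : F) = 0 :=
  DFunLike.ext _ _ fun x => zero_mul x

@[simp] lemma mulOp_one : mulOp (1 : F) = 1 :=
  DFunLike.ext _ _ fun x => one_mul x

lemma mulOp_neg (a : F) : mulOp (-a) = - mulOp a :=
  DFunLike.ext _ _ fun x => neg_mul a x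

lemma mulOp_sub (a b : F) : mulOp (a - b) = mulOp a - mulOp b :=
  DFunLike.ext _ _ fun x => sub_mul a b x

lemma mulOp_inj {a b : F} (h : mulOp a = mulOp b) : a = b := by
  have h1 : mulOp a 1 = mulOp b 1 := by rw [h]
  simpa using h1


variable (d : F →+ F)

lemma mem_OpLE_iff {P : AddMonoid.End F} {N : ℕ} :
    P ∈ OpLE d N ↔ ∃ a : ℕ → F, P = ∑ i ∈ range (N + 1), mulOp (a i) * derOp d ^ i := by
  constructor
  · intro hP
    induction hP using AddSubgroup.closure_induction with
    | mem P hP =>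
      obtain ⟨a, i, hi, rfl⟩ := hP
      refine ⟨fun j => if j = i then a else 0, ?_⟩
      rw [Finset.sum_eq_single i]
      · simp
      · intro b _ hb; simp [hb]
      · intro h; exact absurd (Finset.mem_range.2 (Nat.lt_succ_of_le hi)) h
    | zero => exact ⟨0, by simp⟩
    | add P Q _ _ hP hQ =>
      obtain ⟨a, rfl⟩ := hP; obtain ⟨b, rfl⟩ := hQ
      exact ⟨a + b, by simp [mulOp_add, add_mul, Finset.sum_add_distrib]⟩
    | neg P _ hP =>
      obtain ⟨a, rfl⟩ := hP
      refine ⟨-a, ?_⟩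
      rw [← Finset.sum_neg_distrib]
      exact Finset.sum_congr rfl fun i _ => by
        rw [Pi.neg_apply, mulOp_neg]; exact (neg_mul (mulOp (a i)) (derOp d ^ i)).symm
  · rintro ⟨a, rfl⟩
    exact AddSubgroup.sum_mem _ (fun i hi => AddSubgroup.subset_closure
      ⟨a i, i, Nat.lt_succ_iff.1 (Finset.mem_range.1 hi), rfl⟩)

lemma OpLE_mono {k N : ℕ} (h : k ≤ N) : OpLE d k ≤ OpLE d N := by
  apply AddSubgroup.closure_mono
  rintro P ⟨a, i, hi, rfl⟩; exact ⟨a, i, hi.trans h, rfl⟩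

lemma gen_mem_OpLE {a : F} {i N : ℕ} (h : i ≤ N) : mulOp a * derOp d ^ i ∈ OpLE d N :=
  AddSubgroup.subset_closure ⟨a, i, h, rfl⟩

lemma mulOp_mem_OpLE {a : F} {N : ℕ} : mulOp a ∈ OpLE d N := by
  simpa using gen_mem_OpLE d (Nat.zero_le N) (a := a)

lemma mulOp_mul_mem_OpLE {P : AddMonoid.End F} {N : ℕ} (a : F) (hP : P ∈ OpLE d N) :
    mulOp a * P ∈ OpLE d N := by
  rw [mem_OpLE_iff] at hP ⊢
  obtain ⟨b, rfl⟩ := hP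
  exact ⟨fun i => a * b i, by simp [Finset.mul_sum, mulOp_mul, mul_assoc]⟩

end Infra
open Finset
section Infra2

variable {F : Type} [Field F] (d : F →+ F)

@[simp] lemma derOp_apply (x : F) : derOp d x = d x := rfl

lemma d_one (hd : IsDeriv d) : d 1 = 0 := by
  have h := hd 1 1
  rw [mul_one, one_mul, mul_one] at h
  exact (left_eq_add.1 h)

lemma d_inv (hd : IsDeriv d) {a : F} (ha : a ≠ 0) (h : d a = 0) : d a⁻¹ = 0 := by
  have h1 : d (a * a⁻¹) = 0 := by rw [mul_inv_cancel₀ ha]; exact d_one d hd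
  have h2 := hd a a⁻¹
  rw [h, zero_mul, zero_add, h1] at h2
  rcases mul_eq_zero.1 h2.symm with h3 | h3
  · exact absurd h3 ha
  · exact h3

lemma D_mul_mulOp (hd : IsDeriv d) (b : F) :
    derOp d * mulOp b = mulOp (d b) + mulOp b * derOp d :=
  DFunLike.ext _ _ fun x => hd b x

lemma D_mul_mulOp_mul (hd : IsDeriv d) (b : F) (P : AddMonoid.End F) :
    derOp d * (mulOp b * P) = mulOp (d b) * P + mulOp b * (derOp d * P) := by
  rw [← mul_assoc, D_mul_mulOp d hd, add_mul, mul_assoc]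

lemma D_mul_OpLE {P : AddMonoid.End F} {N : ℕ} (hd : IsDeriv d) (hP : P ∈ OpLE d N) :
    derOp d * P ∈ OpLE d (N + 1) := by
  rw [mem_OpLE_iff] at hP
  obtain ⟨a, rfl⟩ := hP
  rw [mul_sum]
  refine AddSubgroup.sum_mem _ fun i hi => ?_
  have hi' : i ≤ N := Nat.lt_succ_iff.1 (mem_range.1 hi)
  rw [D_mul_mulOp_mul d hd]
  refine AddSubgroup.add_mem _ (gen_mem_OpLE d (hi'.trans (Nat.le_succ N))) ?_
  rw [← pow_succ']
  exact gen_mem_OpLE d (Nat.succ_le_succ hi')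

lemma OpLE_mul_Dpow {P : AddMonoid.End F} {N : ℕ} (j : ℕ) (hP : P ∈ OpLE d N) :
    P * derOp d ^ j ∈ OpLE d (N + j) := by
  rw [mem_OpLE_iff] at hP
  obtain ⟨a, rfl⟩ := hP
  rw [sum_mul]
  refine AddSubgroup.sum_mem _ fun i hi => ?_
  have hi' : i ≤ N := Nat.lt_succ_iff.1 (mem_range.1 hi)
  rw [mul_assoc, ← pow_add]
  exact gen_mem_OpLE d (Nat.add_le_add hi' le_rfl)

lemma Dpow_mul_mulOp_mem (hd : IsDeriv d) (i : ℕ) (b : F) :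
    derOp d ^ i * mulOp b ∈ OpLE d i := by
  induction i with
  | zero => rw [pow_zero, one_mul]; exact mulOp_mem_OpLE d
  | succ k ih =>
      rw [pow_succ', mul_assoc]
      exact D_mul_OpLE d hd ih

lemma mul_OpLE {P Q : AddMonoid.End F} {p q : ℕ} (hd : IsDeriv d)
    (hP : P ∈ OpLE d p) (hQ : Q ∈ OpLE d q) : P * Q ∈ OpLE d (p + q) := by
  rw [mem_OpLE_iff] at hP hQ
  obtain ⟨a, rfl⟩ := hP; obtain ⟨b, rfl⟩ := hQ
  rw [sum_mul]
  refine AddSubgroup.sum_mem _ fun i hi => ?_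
  rw [mul_sum]
  refine AddSubgroup.sum_mem _ fun j hj => ?_
  have hi' : i ≤ p := Nat.lt_succ_iff.1 (mem_range.1 hi)
  have hj' : j ≤ q := Nat.lt_succ_iff.1 (mem_range.1 hj)
  have : mulOp (a i) * derOp d ^ i * (mulOp (b j) * derOp d ^ j)
      = mulOp (a i) * ((derOp d ^ i * mulOp (b j)) * derOp d ^ j) := by
    rw [mul_assoc, ← mul_assoc (derOp d ^ i)]
  rw [this]
  refine mulOp_mul_mem_OpLE d _ ?_
  have h1 : (derOp d ^ i * mulOp (b j)) * derOp d ^ j ∈ OpLE d (i + j) :=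
    OpLE_mul_Dpow d j (Dpow_mul_mulOp_mem d hd i (b j))
  exact OpLE_mono d (Nat.add_le_add hi' hj') h1

/-- The commutator of `D^i` with multiplication by `b`. -/
def Ccomm (i : ℕ) (b : F) : AddMonoid.End F :=
  derOp d ^ i * mulOp b - mulOp b * derOp d ^ i

lemma Ccomm_zero (b : F) : Ccomm d 0 b = 0 := by
  simp [Ccomm]

lemma Ccomm_one (hd : IsDeriv d) (b : F) : Ccomm d 1 b = mulOp (d b) := by
  rw [Ccomm, pow_one, D_mul_mulOp d hd]; abel

lemma Ccomm_succ_succ (hd : IsDeriv d) : ∀ i (b : F), ∃ E ∈ OpLE d i,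
    Ccomm d (i + 2) b = mulOp (((i : F) + 2) * d b) * derOp d ^ (i + 1) + E := by
  intro i
  induction i with
  | zero =>
      intro b
      refine ⟨mulOp (d (d b)), mulOp_mem_OpLE d, ?_⟩
      rw [Ccomm]
      have h2 : derOp d ^ 2 = derOp d * derOp d := by rw [pow_two]
      have hD : derOp d ^ (0 + 1) = derOp d := by rw [zero_add, pow_one]
      rw [h2, hD, mul_assoc, D_mul_mulOp d hd, mul_add, ← mul_assoc,
        D_mul_mulOp d hd, D_mul_mulOp d hd]
      have hc : (((0:ℕ) : F) + 2) * d b = d b + d b := by push_cast; ring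
      rw [hc, mulOp_add, add_mul]
      simp only [mul_assoc]
      abel_nf
      rw [smul_mul_assoc]
  | succ k ih =>
      intro b
      obtain ⟨E, hE, hEq⟩ := ih b
      refine ⟨mulOp (d (((k : F) + 2) * d b)) * derOp d ^ (k + 1) + derOp d * E,
        AddSubgroup.add_mem _ (gen_mem_OpLE d le_rfl)
          (D_mul_OpLE d hd hE), ?_⟩
      have hpow : derOp d ^ (k + 1 + 2) = derOp d * derOp d ^ (k + 2) := by
        rw [← pow_succ']
      have hC : derOp d ^ (k + 2) * mulOp b
          = mulOp b * derOp d ^ (k + 2) + mulOp (((k : F) + 2) * d b) * derOp d ^ (k + 1) + E := by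
        have := hEq
        rw [Ccomm, sub_eq_iff_eq_add] at this
        rw [this]; abel
      rw [Ccomm, hpow, mul_assoc, hC]
      rw [mul_add, mul_add, D_mul_mulOp_mul d hd, D_mul_mulOp_mul d hd]
      have e1 : mulOp b * (derOp d * derOp d ^ (k + 2)) = mulOp b * derOp d ^ (k + 1 + 2) := by
        rw [← pow_succ']
      have e2 : mulOp (((k : F) + 2) * d b) * (derOp d * derOp d ^ (k + 1))
          = mulOp (((k : F) + 2) * d b) * derOp d ^ (k + 2) := by
        rw [← pow_succ']
      have e3 : mulOp (d b) * derOp d ^ (k + 2) + mulOp (((k : F) + 2) * d b) * derOp d ^ (k + 2)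
          = mulOp (((k : F) + 1 + 2) * d b) * derOp d ^ (k + 2) := by
        rw [← add_mul, ← mulOp_add]
        congr 2
        ring
      rw [e1, e2]
      rw [sub_eq_iff_eq_add]
      have hcast : ((k : F) + 1 + 2) = (((k + 1 : ℕ) : F) + 2) := by push_cast; ring
      rw [← hcast, ← e3]
      abel

lemma Ccomm_mem (hd : IsDeriv d) (i : ℕ) (b : F) : Ccomm d i b ∈ OpLE d (i - 1) := by
  match i with
  | 0 => rw [Ccomm_zero]; exact AddSubgroup.zero_mem _
  | 1 => rw [Ccomm_one d hd]; exact mulOp_mem_OpLE d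
  | (k + 2) =>
      obtain ⟨E, hE, hEq⟩ := Ccomm_succ_succ d hd k b
      rw [hEq]
      exact AddSubgroup.add_mem _ (gen_mem_OpLE d le_rfl)
        (OpLE_mono d (by omega) hE)

lemma commutator_OpLE (hd : IsDeriv d) {P Q : AddMonoid.End F} {p q : ℕ}
    (hP : P ∈ OpLE d p) (hQ : Q ∈ OpLE d q) : P * Q - Q * P ∈ OpLE d (p + q - 1) := by
  rw [mem_OpLE_iff] at hP hQ
  obtain ⟨a, rfl⟩ := hP; obtain ⟨b, rfl⟩ := hQ
  have hexp : (∑ i ∈ range (p+1), mulOp (a i) * derOp d ^ i) *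
        (∑ j ∈ range (q+1), mulOp (b j) * derOp d ^ j)
      - (∑ j ∈ range (q+1), mulOp (b j) * derOp d ^ j) *
        (∑ i ∈ range (p+1), mulOp (a i) * derOp d ^ i)
      = ∑ i ∈ range (p+1), ∑ j ∈ range (q+1),
          ((mulOp (a i) * derOp d ^ i) * (mulOp (b j) * derOp d ^ j)
           - (mulOp (b j) * derOp d ^ j) * (mulOp (a i) * derOp d ^ i)) := by
    rw [sum_mul, mul_sum]
    rw [← sum_sub_distrib]
    refine sum_congr rfl fun i _ => ?_
    rw [mul_sum, sum_mul, ← sum_sub_distrib]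
  rw [hexp]
  refine AddSubgroup.sum_mem _ fun i hi => AddSubgroup.sum_mem _ fun j hj => ?_
  have hi' : i ≤ p := Nat.lt_succ_iff.1 (mem_range.1 hi)
  have hj' : j ≤ q := Nat.lt_succ_iff.1 (mem_range.1 hj)
  -- rewrite the single commutator
  have hkey : (mulOp (a i) * derOp d ^ i) * (mulOp (b j) * derOp d ^ j)
      - (mulOp (b j) * derOp d ^ j) * (mulOp (a i) * derOp d ^ i)
      = mulOp (a i) * (Ccomm d i (b j) * derOp d ^ j)
        - mulOp (b j) * (Ccomm d j (a i) * derOp d ^ i) := by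
    rw [Ccomm, Ccomm, sub_mul, sub_mul, mul_sub, mul_sub]
    have r1 : mulOp (a i) * (derOp d ^ i * mulOp (b j) * derOp d ^ j)
        = mulOp (a i) * derOp d ^ i * (mulOp (b j) * derOp d ^ j) := by
      simp only [mul_assoc]
    have r2 : mulOp (a i) * (mulOp (b j) * derOp d ^ i * derOp d ^ j)
        = mulOp (b j) * (mulOp (a i) * derOp d ^ i * derOp d ^ j) := by
      simp only [← mul_assoc, ← mulOp_mul]
      rw [mul_comm (a i)]
    have r3 : mulOp (b j) * (derOp d ^ j * mulOp (a i) * derOp d ^ i)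
        = mulOp (b j) * derOp d ^ j * (mulOp (a i) * derOp d ^ i) := by
      simp only [mul_assoc]
    have r4 : mulOp (b j) * (mulOp (a i) * derOp d ^ j * derOp d ^ i)
        = mulOp (b j) * (mulOp (a i) * derOp d ^ i * derOp d ^ j) := by
      rw [mul_assoc (mulOp (a i)), mul_assoc (mulOp (a i)), ← pow_add, ← pow_add,
        Nat.add_comm j i]
    rw [r1, r2, r3, r4]
    abel
  rw [hkey]
  have m1 : mulOp (a i) * (Ccomm d i (b j) * derOp d ^ j) ∈ OpLE d (p + q - 1) := by
    match i, hi' with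
    | 0, _ => rw [Ccomm_zero, zero_mul, mul_zero]; exact AddSubgroup.zero_mem _
    | (k+1), hk =>
      refine mulOp_mul_mem_OpLE d _ ?_
      have := OpLE_mul_Dpow d j (Ccomm_mem d hd (k+1) (b j))
      exact OpLE_mono d (by omega) this
  have m2 : mulOp (b j) * (Ccomm d j (a i) * derOp d ^ i) ∈ OpLE d (p + q - 1) := by
    match j, hj' with
    | 0, _ => rw [Ccomm_zero, zero_mul, mul_zero]; exact AddSubgroup.zero_mem _
    | (k+1), hk =>
      refine mulOp_mul_mem_OpLE d _ ?_
      have := OpLE_mul_Dpow d i (Ccomm_mem d hd (k+1) (a i))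
      exact OpLE_mono d (by omega) this
  exact AddSubgroup.sub_mem _ m1 m2

end Infra2
open Finset
section Infra3

variable {F : Type} [Field F] (d : F →+ F)

lemma Dpow_mulOp_const (hd : IsDeriv d) {α : F} (hα : d α = 0) (i : ℕ) :
    derOp d ^ i * mulOp α = mulOp α * derOp d ^ i := by
  induction i with
  | zero => rw [pow_zero, one_mul, mul_one]
  | succ k ih =>
      rw [pow_succ', mul_assoc, ih, ← mul_assoc, D_mul_mulOp d hd, hα, mulOp_zero,
        zero_add, mul_assoc, ← pow_succ']

lemma const_comm_OpLE (hd : IsDeriv d) {α : F} (hα : d α = 0)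
    {P : AddMonoid.End F} {N : ℕ} (hP : P ∈ OpLE d N) : mulOp α * P = P * mulOp α := by
  rw [mem_OpLE_iff] at hP
  obtain ⟨a, rfl⟩ := hP
  rw [mul_sum, sum_mul]
  refine sum_congr rfl fun i _ => ?_
  rw [← mul_assoc, ← mulOp_mul, mul_comm α, mulOp_mul, mul_assoc,
    ← Dpow_mulOp_const d hd hα, ← mul_assoc]

variable [CharZero F]

/-- Independence of the powers of the derivation. -/
lemma indep (hd : IsDeriv d) {x : F} (hx : d x ≠ 0) :
    ∀ N (a : ℕ → F), ∑ i ∈ range (N + 1), mulOp (a i) * derOp d ^ i = 0 →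
      ∀ i ≤ N, a i = 0 := by
  intro N
  induction N using Nat.strong_induction_on with
  | _ N IH =>
  match N with
  | 0 =>
      intro a h i hi
      interval_cases i
      have h1 : (∑ i ∈ range 1, mulOp (a i) * derOp d ^ i) 1 = (0 : AddMonoid.End F) 1 := by
        rw [h]
      simpa using h1
  | 1 =>
      intro a h i hi
      have e1 : (∑ i ∈ range 2, mulOp (a i) * derOp d ^ i) = mulOp (a 0) + mulOp (a 1) * derOp d := by
        rw [show (2:ℕ) = 1 + 1 from rfl, sum_range_succ, sum_range_succ, sum_range_zero,
          zero_add, pow_zero, mul_one, pow_one]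
      rw [e1] at h
      have h1 : a 0 = 0 := by
        have h2 : (mulOp (a 0) + mulOp (a 1) * derOp d) 1 = (0 : AddMonoid.End F) 1 := by rw [h]
        simp only [End_add_apply, End_mul_apply, mulOp_apply, derOp_apply, End_zero_apply] at h2
        rw [d_one d hd, mul_zero, add_zero, mul_one] at h2
        exact h2
      have ha1 : a 1 = 0 := by
        have h2 : (mulOp (a 0) + mulOp (a 1) * derOp d) x = (0 : AddMonoid.End F) x := by rw [h]
        simp only [End_add_apply, End_mul_apply, mulOp_apply, derOp_apply, End_zero_apply] at h2
        rw [h1, zero_mul, zero_add] at h2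
        rcases mul_eq_zero.1 h2 with h' | h'
        · exact h'
        · exact absurd h' hx
      interval_cases i
      · exact h1
      · exact ha1
  | (k + 2) =>
      intro a h
      set m := k + 2 with hm
      -- commutator relation
      have hC : ∑ i ∈ range (m + 1), mulOp (a i) * Ccomm d i x = 0 := by
        have e1 : (∑ i ∈ range (m+1), mulOp (a i) * derOp d ^ i) * mulOp x
            = ∑ i ∈ range (m+1), mulOp (a i) * (derOp d ^ i * mulOp x) := by
          rw [sum_mul]; exact sum_congr rfl fun i _ => by rw [mul_assoc]
        have e2 : mulOp x * (∑ i ∈ range (m+1), mulOp (a i) * derOp d ^ i)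
            = ∑ i ∈ range (m+1), mulOp (a i) * (mulOp x * derOp d ^ i) := by
          rw [mul_sum]; exact sum_congr rfl fun i _ => by
            rw [← mul_assoc, ← mul_assoc, ← mulOp_mul, ← mulOp_mul, mul_comm x]
        have : (∑ i ∈ range (m+1), mulOp (a i) * derOp d ^ i) * mulOp x
            - mulOp x * (∑ i ∈ range (m+1), mulOp (a i) * derOp d ^ i) = 0 := by
          rw [h, zero_mul, mul_zero, sub_zero]
        rw [e1, e2, ← sum_sub_distrib] at this
        rw [← this]
        refine sum_congr rfl fun i _ => ?_
        rw [Ccomm, mul_sub]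
      -- error terms
      set Efun : ℕ → AddMonoid.End F :=
        fun i => Ccomm d i x - mulOp ((i : F) * d x) * derOp d ^ (i - 1) with hEfun
      have hE0 : Efun 0 = 0 := by
        rw [hEfun]; simp [Ccomm_zero]
      have hE1 : Efun 1 = 0 := by
        rw [hEfun]; simp [Ccomm_one d hd]
      have hEmem : ∀ j, Efun (j + 2) ∈ OpLE d j := by
        intro j
        obtain ⟨E, hEm, hEq⟩ := Ccomm_succ_succ d hd j x
        have : Efun (j + 2) = E := by
          rw [hEfun]
          simp only [hEq]
          have hcast : (((j+2 : ℕ)) : F) = (j : F) + 2 := by push_cast; ring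
          rw [hcast]
          have : (j + 2 - 1) = j + 1 := by omega
          rw [this]
          abel
        rw [this]; exact hEm
      have hEmem' : ∀ i, i ∈ range (m + 1) → mulOp (a i) * Efun i ∈ OpLE d k := by
        intro i hi
        match i, hi with
        | 0, _ => rw [hE0, mul_zero]; exact AddSubgroup.zero_mem _
        | 1, _ => rw [hE1, mul_zero]; exact AddSubgroup.zero_mem _
        | (j+2), hj =>
            refine mulOp_mul_mem_OpLE d _ (OpLE_mono d ?_ (hEmem j))
            have := mem_range.1 hj
            omega
      have hG : ∑ i ∈ range (m+1), mulOp (a i) * Efun i ∈ OpLE d k :=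
        AddSubgroup.sum_mem _ hEmem'
      rw [mem_OpLE_iff] at hG
      obtain ⟨e, hGe⟩ := hG
      -- now rewrite hC
      have hsplit : ∀ i, mulOp (a i) * Ccomm d i x
          = mulOp (a i * ((i : F) * d x)) * derOp d ^ (i - 1) + mulOp (a i) * Efun i := by
        intro i
        rw [hEfun]
        rw [mulOp_mul, mul_assoc]
        rw [mul_sub]
        abel
      rw [funext hsplit] at hC
      rw [sum_add_distrib, hGe] at hC
      -- reindex the first sum
      have hre : ∑ i ∈ range (m+1), mulOp (a i * ((i : F) * d x)) * derOp d ^ (i - 1)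
          = ∑ j ∈ range m, mulOp (a (j+1) * (((j+1 : ℕ)) : F) * d x) * derOp d ^ j := by
        rw [sum_range_succ']
        have h0 : mulOp (a 0 * (((0:ℕ) : F) * d x)) * derOp d ^ (0 - 1) = 0 := by
          rw [Nat.cast_zero, zero_mul, mul_zero, mulOp_zero, zero_mul]
        rw [h0, add_zero]
        refine sum_congr rfl fun j _ => ?_
        have : (j + 1 - 1) = j := by omega
        rw [this, mul_assoc]
      rw [hre] at hC
      -- extend e-sum to range m
      have hext : ∑ j ∈ range m, mulOp (if j < k + 1 then e j else 0) * derOp d ^ j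
          = ∑ j ∈ range (k+1), mulOp (e j) * derOp d ^ j := by
        rw [hm, sum_range_succ]
        have hz : mulOp (if k + 1 < k + 1 then e (k+1) else 0) * derOp d ^ (k+1) = 0 := by
          rw [if_neg (lt_irrefl _), mulOp_zero, zero_mul]
        rw [hz, add_zero]
        exact sum_congr rfl fun j hj => by rw [if_pos (mem_range.1 hj)]
      rw [← hext, ← sum_add_distrib] at hC
      have hC' : ∑ j ∈ range m, mulOp
          (a (j+1) * (((j+1 : ℕ)) : F) * d x + (if j < k + 1 then e j else 0)) * derOp d ^ j
          = 0 := by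
        rw [← hC]
        exact sum_congr rfl fun j _ => by rw [mulOp_add, add_mul]
      -- apply IH at level m - 1 = k+1
      have hIH := IH (k+1) (by omega) (fun j =>
        a (j+1) * (((j+1 : ℕ)) : F) * d x + (if j < k + 1 then e j else 0)) hC'
      have htop : a m = 0 := by
        have this : a (k+1+1) * (((k+1+1 : ℕ)) : F) * d x + (if k+1 < k + 1 then e (k+1) else 0) = 0 :=
          hIH (k+1) le_rfl
        rw [if_neg (lt_irrefl _), add_zero] at this
        rcases mul_eq_zero.1 this with h' | h'
        · rcases mul_eq_zero.1 h' with h'' | h''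
          · exact h''
          · exfalso; exact Nat.cast_ne_zero.2 (by omega) h''
        · exact absurd h' hx
      -- peel the top term from the original relation
      have hpeel : ∑ i ∈ range (m+1), mulOp (a i) * derOp d ^ i
          = ∑ i ∈ range m, mulOp (a i) * derOp d ^ i := by
        rw [sum_range_succ, htop, mulOp_zero, zero_mul, add_zero]
      rw [hpeel] at h
      have hlow := IH (k+1) (by omega) a h
      intro i hi
      rcases Nat.lt_or_ge i m with h' | h'
      · exact hlow i (by omega)
      · have : i = m := by omega
        rw [this]; exact htop

lemma top_zero (hd : IsDeriv d) {x : F} (hx : d x ≠ 0) {c : F} {m : ℕ} (hm : 1 ≤ m)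
    (h : mulOp c * derOp d ^ m ∈ OpLE d (m - 1)) : c = 0 := by
  rw [mem_OpLE_iff] at h
  obtain ⟨e, he⟩ := h
  have hm1 : m - 1 + 1 = m := by omega
  rw [hm1] at he
  have hrel : ∑ i ∈ range (m+1), mulOp (if i = m then c else - e i) * derOp d ^ i = 0 := by
    rw [sum_range_succ, if_pos rfl]
    have : ∀ i ∈ range m, mulOp (if i = m then c else - e i) * derOp d ^ i
        = - (mulOp (e i) * derOp d ^ i) := by
      intro i hi
      rw [if_neg (by have := mem_range.1 hi; omega), mulOp_neg]
      exact neg_mul (mulOp (e i)) (derOp d ^ i)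
    rw [sum_congr rfl this, sum_neg_distrib, ← he]
    abel
  have := indep d hd hx m _ hrel m le_rfl
  rwa [if_pos rfl] at this

lemma exists_hasOrd {P : AddMonoid.End F} (hP : IsOp d P) : ∃ q, HasOrd d P q := by
  classical
  obtain ⟨N, hN⟩ := hP
  have hex : ∃ k, P ∈ OpLE d k := ⟨N, hN⟩
  exact ⟨Nat.find hex, Nat.find_spec hex, fun k hk => Nat.find_le hk⟩

lemma exists_dx {L : AddMonoid.End F} {n : ℕ} (hn : 1 ≤ n)
    (hmem : L ∈ OpLE d n) (hmin : ∀ k, L ∈ OpLE d k → n ≤ k) : ∃ x, d x ≠ 0 := by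
  by_contra hcon
  push_neg at hcon
  have hD : derOp d = 0 := DFunLike.ext _ _ fun x => hcon x
  have hsub : OpLE d n ≤ OpLE d 0 := by
    rw [OpLE]
    rw [AddSubgroup.closure_le]
    rintro P ⟨a, i, hi, rfl⟩
    match i with
    | 0 => rw [pow_zero, mul_one]; exact mulOp_mem_OpLE d
    | (j+1) =>
        rw [hD, zero_pow (by omega : j + 1 ≠ 0), mul_zero]
        exact AddSubgroup.zero_mem _
  have := hmin 0 (hsub hmem)
  omega

end Infra3
open Finset
section Infra4

variable {F : Type} [Field F] (d : F →+ F) (L : AddMonoid.End F)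

lemma mem_CPoly_iff {P : AddMonoid.End F} :
    P ∈ CPoly d L ↔ ∃ (N : ℕ) (q : ℕ → F), (∀ k, d (q k) = 0) ∧
      P = ∑ i ∈ range N, mulOp (q i) * L ^ i := by
  constructor
  · rintro ⟨p, hp, rfl⟩
    exact ⟨p.natDegree + 1, p.coeff, hp, rfl⟩
  · rintro ⟨N, q, hq, rfl⟩
    match N with
    | 0 =>
        refine ⟨0, fun k => by simp, ?_⟩
        simp
    | (N' + 1) =>
        set p : Polynomial F := ∑ i ∈ range (N' + 1), Polynomial.C (q i) * Polynomial.X ^ i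
          with hp
        have hcoeff : ∀ k, p.coeff k = if k < N' + 1 then q k else 0 := by
          intro k
          rw [hp, Polynomial.finset_sum_coeff]
          have : ∀ i ∈ range (N' + 1), (Polynomial.C (q i) * Polynomial.X ^ i).coeff k
              = if i = k then q i else 0 := by
            intro i _
            rw [Polynomial.coeff_C_mul, Polynomial.coeff_X_pow]
            by_cases h : k = i
            · rw [if_pos h, if_pos h.symm, mul_one]
            · rw [if_neg h, if_neg (fun hh => h hh.symm), mul_zero]
          rw [sum_congr rfl this, sum_ite_eq' (range (N' + 1)) k q]
          by_cases hk : k < N' + 1 <;> simp [hk]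
        have hdeg : p.natDegree ≤ N' := by
          rw [Polynomial.natDegree_le_iff_coeff_eq_zero]
          intro K hK
          rw [hcoeff K, if_neg (by omega)]
        refine ⟨p, ?_, ?_⟩
        · intro k
          rw [hcoeff k]
          by_cases h : k < N' + 1
          · rw [if_pos h]; exact hq k
          · rw [if_neg h]; exact map_zero d
        · have h1 : ∑ i ∈ range (N' + 1), mulOp (q i) * L ^ i
              = ∑ i ∈ range (N' + 1), mulOp (p.coeff i) * L ^ i := by
            refine sum_congr rfl fun i hi => ?_
            rw [hcoeff i, if_pos (mem_range.1 hi)]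
          rw [h1]
          refine (sum_subset ?_ ?_).symm
          · exact range_subset_range.2 (by omega)
          · intro i _ hi
            have h2 : ¬ i < p.natDegree + 1 := fun hc => hi (mem_range.2 hc)
            have : p.natDegree < i := by omega
            rw [Polynomial.coeff_eq_zero_of_natDegree_lt this, mulOp_zero, zero_mul]

lemma cpoly_rep_extend {N N' : ℕ} (q : ℕ → F) (h : N ≤ N') :
    ∑ i ∈ range N, mulOp (q i) * L ^ i
      = ∑ i ∈ range N', mulOp (if i < N then q i else 0) * L ^ i := by
  rw [← sum_subset (range_subset_range.2 h)]
  · exact sum_congr rfl fun i hi => by rw [if_pos (mem_range.1 hi)]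
  · intro i _ hi
    rw [if_neg (fun hc => hi (mem_range.2 hc)), mulOp_zero, zero_mul]

lemma cpoly_add {P₁ P₂ : AddMonoid.End F} (h₁ : P₁ ∈ CPoly d L) (h₂ : P₂ ∈ CPoly d L) :
    P₁ + P₂ ∈ CPoly d L := by
  rw [mem_CPoly_iff] at h₁ h₂ ⊢
  obtain ⟨N₁, q₁, hq₁, rfl⟩ := h₁
  obtain ⟨N₂, q₂, hq₂, rfl⟩ := h₂
  refine ⟨max N₁ N₂, fun i => (if i < N₁ then q₁ i else 0) + (if i < N₂ then q₂ i else 0),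
    ?_, ?_⟩
  · intro k
    show d ((if k < N₁ then q₁ k else 0) + (if k < N₂ then q₂ k else 0)) = 0
    rw [map_add]
    have e1 : d (if k < N₁ then q₁ k else 0) = 0 := by
      by_cases h : k < N₁
      · rw [if_pos h]; exact hq₁ k
      · rw [if_neg h]; exact map_zero d
    have e2 : d (if k < N₂ then q₂ k else 0) = 0 := by
      by_cases h : k < N₂
      · rw [if_pos h]; exact hq₂ k
      · rw [if_neg h]; exact map_zero d
    rw [e1, e2, add_zero]
  · show _ = ∑ i ∈ range (max N₁ N₂),
        mulOp ((if i < N₁ then q₁ i else 0) + (if i < N₂ then q₂ i else 0)) * L ^ i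
    rw [cpoly_rep_extend L q₁ (le_max_left N₁ N₂),
      cpoly_rep_extend L q₂ (le_max_right N₁ N₂), ← sum_add_distrib]
    exact sum_congr rfl fun i _ => by rw [mulOp_add, add_mul]

lemma cpoly_monomial {c : F} (hc : d c = 0) (k : ℕ) : mulOp c * L ^ k ∈ CPoly d L := by
  rw [mem_CPoly_iff]
  refine ⟨k + 1, fun i => if i = k then c else 0, fun j => ?_, ?_⟩
  · show d (if j = k then c else 0) = 0
    by_cases h : j = k
    · rw [if_pos h]; exact hc
    · rw [if_neg h]; exact map_zero d
  · show mulOp c * L ^ k = ∑ i ∈ range (k + 1), mulOp (if i = k then c else 0) * L ^ i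
    rw [Finset.sum_eq_single k (fun b _ hb => by rw [if_neg hb, mulOp_zero, zero_mul])
      (fun h => absurd (self_mem_range_succ k) h), if_pos rfl]

end Infra4
open Finset
section Infra5

variable {F : Type} [Field F] [CharZero F] (d : F →+ F) (L : AddMonoid.End F) (n : ℕ)

lemma Lpow_mem (hd : IsDeriv d) (hLn : L ∈ OpLE d n) : ∀ k, L ^ k ∈ OpLE d (n * k) := by
  intro k
  induction k with
  | zero => rw [pow_zero, ← mulOp_one]; exact mulOp_mem_OpLE d
  | succ j ih =>
      rw [pow_succ, Nat.mul_succ]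
      exact mul_OpLE d hd ih hLn

lemma Lpow_sub_Dpow (hd : IsDeriv d) (hn : 1 ≤ n) (hLn : L ∈ OpLE d n)
    (hnf : L - derOp d ^ n ∈ OpLE d (n - 2)) :
    ∀ k, L ^ k - derOp d ^ (n * k) ∈ OpLE d (n * k - 1) := by
  intro k
  induction k with
  | zero =>
      rw [pow_zero, Nat.mul_zero, pow_zero, sub_self]
      exact AddSubgroup.zero_mem _
  | succ j ih =>
      match j, ih with
      | 0, _ =>
          have e0 : L ^ 1 - derOp d ^ (n * 1) = L - derOp d ^ n := by
            rw [pow_one, Nat.mul_one]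
          rw [e0]
          exact OpLE_mono d (by omega) hnf
      | (j' + 1), ih =>
          set j := j' + 1 with hj
          have hjpos : 1 ≤ n * j := Nat.mul_pos (by omega) (by omega)
          have hkey : L ^ (j+1) - derOp d ^ (n * (j+1))
              = (L ^ j - derOp d ^ (n * j)) * L + derOp d ^ (n * j) * (L - derOp d ^ n) := by
            rw [sub_mul, mul_sub, pow_succ, ← pow_add, ← Nat.mul_succ]
            abel
          rw [hkey]
          have h1 : n * j + n = n * (j + 1) := by ring
          refine AddSubgroup.add_mem _ ?_ ?_
          · have := mul_OpLE d hd ih hLn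
            exact OpLE_mono d (by omega) this
          · have hD : derOp d ^ (n * j) ∈ OpLE d (n * j) := by
              have e1 : derOp d ^ (n * j) = mulOp 1 * derOp d ^ (n * j) := by
                rw [mulOp_one, one_mul]
              rw [e1]; exact gen_mem_OpLE d le_rfl
            have := mul_OpLE d hd hD hnf
            exact OpLE_mono d (by omega) this

lemma Lpow_cent (hd : IsDeriv d) (hLn : L ∈ OpLE d n) (k : ℕ) : L ^ k ∈ Cent d L :=
  ⟨⟨n * k, Lpow_mem d L n hd hLn k⟩, by rw [← pow_succ', ← pow_succ]⟩

lemma cent_zero : (0 : AddMonoid.End F) ∈ Cent d L :=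
  ⟨⟨0, AddSubgroup.zero_mem _⟩, by rw [mul_zero, zero_mul]⟩

lemma cent_sub {A A' : AddMonoid.End F} (hA : A ∈ Cent d L) (hA' : A' ∈ Cent d L) :
    A - A' ∈ Cent d L := by
  obtain ⟨⟨p, hp⟩, hc⟩ := hA
  obtain ⟨⟨q, hq⟩, hc'⟩ := hA'
  refine ⟨⟨max p q, AddSubgroup.sub_mem _ (OpLE_mono d (le_max_left p q) hp)
    (OpLE_mono d (le_max_right p q) hq)⟩, ?_⟩
  rw [mul_sub, sub_mul, hc, hc']

lemma cent_add {A A' : AddMonoid.End F} (hA : A ∈ Cent d L) (hA' : A' ∈ Cent d L) :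
    A + A' ∈ Cent d L := by
  obtain ⟨⟨p, hp⟩, hc⟩ := hA
  obtain ⟨⟨q, hq⟩, hc'⟩ := hA'
  refine ⟨⟨max p q, AddSubgroup.add_mem _ (OpLE_mono d (le_max_left p q) hp)
    (OpLE_mono d (le_max_right p q) hq)⟩, ?_⟩
  rw [mul_add, add_mul, hc, hc']

lemma cent_const_mul (hd : IsDeriv d) (hLn : L ∈ OpLE d n) {α : F} (hα : d α = 0)
    {A : AddMonoid.End F} (hA : A ∈ Cent d L) : mulOp α * A ∈ Cent d L := by
  obtain ⟨⟨p, hp⟩, hc⟩ := hA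
  refine ⟨⟨p, mulOp_mul_mem_OpLE d _ hp⟩, ?_⟩
  rw [← mul_assoc, ← const_comm_OpLE d hd hα hLn, mul_assoc, hc, ← mul_assoc]

lemma En_one (hd : IsDeriv d) (c : F) :
    Ccomm d 1 c - mulOp (((1:ℕ):F) * d c) * derOp d ^ (1 - 1) = 0 := by
  rw [Ccomm_one d hd]
  norm_num

lemma En_mem (hd : IsDeriv d) (hn : 1 ≤ n) (c : F) :
    Ccomm d n c - mulOp ((n:F) * d c) * derOp d ^ (n - 1) ∈ OpLE d (n - 2) := by
  match n, hn with
  | 1, _ =>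
      rw [En_one d hd c]
      exact AddSubgroup.zero_mem _
  | (j+2), _ =>
      obtain ⟨E, hEm, hEq⟩ := Ccomm_succ_succ d hd j c
      have hcast : (((j+2:ℕ)) : F) = (j : F) + 2 := by push_cast; ring
      have heq : Ccomm d (j+2) c - mulOp ((((j+2:ℕ)) : F) * d c) * derOp d ^ (j + 2 - 1) = E := by
        rw [hEq, hcast]
        have h1 : (j + 2 - 1) = j + 1 := by omega
        rw [h1]
        abel
      rw [heq]
      exact hEm

/-- If `[L, A]` has order at most `n + m - 2`, the top coefficient of `A` is a constant. -/
lemma top_const (hd : IsDeriv d) (hn : 1 ≤ n)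
    (hnf : L - derOp d ^ n ∈ OpLE d (n - 2)) {x : F} (hx : d x ≠ 0)
    {m : ℕ} (a : ℕ → F)
    (hcomm : L * (∑ i ∈ range (m+1), mulOp (a i) * derOp d ^ i)
           - (∑ i ∈ range (m+1), mulOp (a i) * derOp d ^ i) * L ∈ OpLE d (n + m - 2))
    (hnm : 1 ≤ n - 1 + m) : d (a m) = 0 := by
  set A := ∑ i ∈ range (m+1), mulOp (a i) * derOp d ^ i with hA
  have hAmem : A ∈ OpLE d m := (mem_OpLE_iff d).2 ⟨a, hA⟩
  have h1 : (L - derOp d ^ n) * A - A * (L - derOp d ^ n) ∈ OpLE d ((n-2) + m - 1) :=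
    commutator_OpLE d hd hnf hAmem
  have h1' : (L - derOp d ^ n) * A - A * (L - derOp d ^ n) ∈ OpLE d (n + m - 2) :=
    OpLE_mono d (by omega) h1
  have h2 : derOp d ^ n * A - A * derOp d ^ n ∈ OpLE d (n + m - 2) := by
    have e : derOp d ^ n * A - A * derOp d ^ n
        = (L * A - A * L) - ((L - derOp d ^ n) * A - A * (L - derOp d ^ n)) := by
      rw [sub_mul, mul_sub]; abel
    rw [e]; exact AddSubgroup.sub_mem _ hcomm h1'
  have hexp : derOp d ^ n * A - A * derOp d ^ n
      = ∑ i ∈ range (m+1), Ccomm d n (a i) * derOp d ^ i := by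
    rw [hA, mul_sum, sum_mul, ← sum_sub_distrib]
    refine sum_congr rfl fun i _ => ?_
    have g2 : mulOp (a i) * derOp d ^ i * derOp d ^ n = mulOp (a i) * derOp d ^ n * derOp d ^ i := by
      rw [mul_assoc, mul_assoc, ← pow_add, ← pow_add, Nat.add_comm i n]
    rw [Ccomm, sub_mul, g2, ← mul_assoc]
  have hEterm : ∀ i ∈ range (m+1),
      (Ccomm d n (a i) - mulOp ((n:F) * d (a i)) * derOp d ^ (n-1)) * derOp d ^ i
        ∈ OpLE d (n + m - 2) := by
    intro i hi
    have hi' : i ≤ m := Nat.lt_succ_iff.1 (mem_range.1 hi)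
    match n, hn with
    | 1, _ =>
        rw [En_one d hd (a i), zero_mul]
        exact AddSubgroup.zero_mem _
    | (j+2), _ =>
        have := OpLE_mul_Dpow d i (En_mem d (j+2) hd (by omega) (a i))
        exact OpLE_mono d (by omega) this
  have hT : ∑ i ∈ range (m+1), mulOp ((n:F) * d (a i)) * derOp d ^ (n-1) * derOp d ^ i
      ∈ OpLE d (n + m - 2) := by
    have e : ∑ i ∈ range (m+1), mulOp ((n:F) * d (a i)) * derOp d ^ (n-1) * derOp d ^ i
        = (derOp d ^ n * A - A * derOp d ^ n)
          - ∑ i ∈ range (m+1),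
              (Ccomm d n (a i) - mulOp ((n:F) * d (a i)) * derOp d ^ (n-1)) * derOp d ^ i := by
      rw [hexp, ← sum_sub_distrib]
      refine sum_congr rfl fun i _ => ?_
      rw [sub_mul]
      abel
    rw [e]
    exact AddSubgroup.sub_mem _ h2 (AddSubgroup.sum_mem _ hEterm)
  have hTtop : mulOp ((n:F) * d (a m)) * derOp d ^ (n - 1 + m) ∈ OpLE d (n + m - 2) := by
    have hsplit : mulOp ((n:F) * d (a m)) * derOp d ^ (n - 1 + m)
        = (∑ i ∈ range (m+1), mulOp ((n:F) * d (a i)) * derOp d ^ (n-1) * derOp d ^ i)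
          - ∑ i ∈ range m, mulOp ((n:F) * d (a i)) * derOp d ^ (n-1) * derOp d ^ i := by
      rw [sum_range_succ, mul_assoc, ← pow_add]
      abel
    rw [hsplit]
    refine AddSubgroup.sub_mem _ hT (AddSubgroup.sum_mem _ fun i hi => ?_)
    have hi' : i < m := mem_range.1 hi
    rw [mul_assoc, ← pow_add]
    exact gen_mem_OpLE d (by omega)
  have := top_zero d hd hx (by omega : 1 ≤ n - 1 + m)
    (by rw [show n - 1 + m - 1 = n + m - 2 by omega]; exact hTtop)
  rcases mul_eq_zero.1 this with h' | h'
  · exfalso; exact Nat.cast_ne_zero.2 (by omega) h'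
  · exact h'

/-- A constant-coefficient polynomial in `L` has order divisible by `n`. -/
lemma cpoly_order (hd : IsDeriv d) (hn : 1 ≤ n) (hLn : L ∈ OpLE d n)
    (hnf : L - derOp d ^ n ∈ OpLE d (n - 2)) {x : F} (hx : d x ≠ 0)
    {P : AddMonoid.End F} {k : ℕ} (hP : P ∈ CPoly d L) (hk1 : P ∈ OpLE d k)
    (hk2 : P ∉ OpLE d (k-1)) (hk : 1 ≤ k) : n ∣ k := by
  rw [mem_CPoly_iff] at hP
  obtain ⟨N, q, hq, rfl⟩ := hP
  set P := ∑ i ∈ range N, mulOp (q i) * L ^ i with hPdef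
  by_cases hall : ∀ i ∈ range N, q i = 0
  · exfalso
    have : P = 0 := by
      rw [hPdef]
      refine sum_eq_zero fun i hi => ?_
      rw [hall i hi, mulOp_zero, zero_mul]
    exact hk2 (this ▸ AddSubgroup.zero_mem _)
  · push_neg at hall
    obtain ⟨iw, hiw, hqiw⟩ := hall
    set s := (range N).filter (fun i => q i ≠ 0) with hs
    have hsne : s.Nonempty := ⟨iw, mem_filter.2 ⟨hiw, hqiw⟩⟩
    set i0 := s.max' hsne with hi0def
    have hi0mem : i0 ∈ s := s.max'_mem hsne
    have hi0N : i0 ∈ range N := (mem_filter.1 hi0mem).1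
    have hqi0 : q i0 ≠ 0 := (mem_filter.1 hi0mem).2
    have hle : ∀ j ∈ range N, q j ≠ 0 → j ≤ i0 := fun j hj hqj =>
      s.le_max' j (mem_filter.2 ⟨hj, hqj⟩)
    have hup : P ∈ OpLE d (n * i0) := by
      rw [hPdef]
      refine AddSubgroup.sum_mem _ fun j hj => ?_
      by_cases hqj : q j = 0
      · rw [hqj, mulOp_zero, zero_mul]; exact AddSubgroup.zero_mem _
      · refine mulOp_mul_mem_OpLE d _ (OpLE_mono d ?_ (Lpow_mem d L n hd hLn j))
        exact Nat.mul_le_mul_left n (hle j hj hqj)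
    have hi0pos : 1 ≤ i0 := by
      by_contra hcon
      have hi00 : i0 = 0 := by omega
      have : P ∈ OpLE d (k - 1) := by
        refine OpLE_mono d ?_ hup
        rw [hi00, Nat.mul_zero]
        omega
      exact hk2 this
    have hmon : P - mulOp (q i0) * derOp d ^ (n * i0) ∈ OpLE d (n * i0 - 1) := by
      have hPsplit : P - mulOp (q i0) * derOp d ^ (n * i0)
          = (∑ j ∈ range N \ {i0}, mulOp (q j) * L ^ j)
            + mulOp (q i0) * (L ^ i0 - derOp d ^ (n * i0)) := by
        rw [mul_sub, hPdef, Finset.sum_eq_sum_sdiff_singleton_add hi0N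
          (fun j => mulOp (q j) * L ^ j)]
        abel
      rw [hPsplit]
      refine AddSubgroup.add_mem _ (AddSubgroup.sum_mem _ fun j hj => ?_)
        (mulOp_mul_mem_OpLE d _ (Lpow_sub_Dpow d L n hd hn hLn hnf i0))
      obtain ⟨hjN, hji0⟩ := Finset.mem_sdiff.1 hj
      have hji0' : j ≠ i0 := by simpa using hji0
      by_cases hqj : q j = 0
      · rw [hqj, mulOp_zero, zero_mul]; exact AddSubgroup.zero_mem _
      · have hjlt : j ≤ i0 - 1 := by
          have := hle j hjN hqj
          omega
        refine mulOp_mul_mem_OpLE d _ (OpLE_mono d ?_ (Lpow_mem d L n hd hLn j))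
        have h1 : n * j ≤ n * (i0 - 1) := Nat.mul_le_mul_left n hjlt
        have h2 : n * (i0 - 1) = n * i0 - n := by
          rw [Nat.mul_sub, Nat.mul_one]
        omega
    have hnot : P ∉ OpLE d (n * i0 - 1) := by
      intro hcon
      have : mulOp (q i0) * derOp d ^ (n * i0) ∈ OpLE d (n * i0 - 1) := by
        have e : mulOp (q i0) * derOp d ^ (n * i0)
            = P - (P - mulOp (q i0) * derOp d ^ (n * i0)) := by abel
        rw [e]
        exact AddSubgroup.sub_mem _ hcon hmon
      have hpos : 1 ≤ n * i0 := by
        have := Nat.mul_le_mul hn hi0pos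
        omega
      exact hqi0 (top_zero d hd hx hpos this)
    have hkeq : k = n * i0 := by
      rcases Nat.lt_trichotomy k (n * i0) with h' | h' | h'
      · exfalso
        exact hnot (OpLE_mono d (by omega) hk1)
      · exact h'
      · exfalso
        exact hk2 (OpLE_mono d (by omega) hup)
    exact ⟨i0, hkeq⟩

end Infra5
open Finset
section Infra6

variable {F : Type} [Field F] [CharZero F] (d : F →+ F) (L : AddMonoid.End F) (n : ℕ)
  (B : ℕ → AddMonoid.End F)

/-- Extended basis: powers of `L` at multiples of `n`, `B` elsewhere. -/
def Bp (i : ℕ) : AddMonoid.End F := if n ∣ i then L ^ (i / n) else B i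

lemma Bp_mem (hB : ∀ j, B j ∈ OpLE d j ∧ B j - derOp d ^ j ∈ OpLE d (j - 1) ∧
      L * B j - B j * L ∈ OpLE d (n - 2)) (hd : IsDeriv d) (hn : 1 ≤ n) (hLn : L ∈ OpLE d n) (i : ℕ) :
    Bp L n B i ∈ OpLE d i := by
  rw [Bp]
  by_cases h : n ∣ i
  · rw [if_pos h]
    have := Lpow_mem d L n hd hLn (i / n)
    rwa [Nat.mul_div_cancel' h] at this
  · rw [if_neg h]
    exact (hB i).1

lemma Bp_monic (hB : ∀ j, B j ∈ OpLE d j ∧ B j - derOp d ^ j ∈ OpLE d (j - 1) ∧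
      L * B j - B j * L ∈ OpLE d (n - 2)) (hd : IsDeriv d) (hn : 1 ≤ n) (hLn : L ∈ OpLE d n)
    (hnf : L - derOp d ^ n ∈ OpLE d (n - 2)) (i : ℕ) :
    Bp L n B i - derOp d ^ i ∈ OpLE d (i - 1) := by
  rw [Bp]
  by_cases h : n ∣ i
  · rw [if_pos h]
    have := Lpow_sub_Dpow d L n hd hn hLn hnf (i / n)
    rwa [Nat.mul_div_cancel' h] at this
  · rw [if_neg h]
    exact (hB i).2.1

lemma Bp_comm (hB : ∀ j, B j ∈ OpLE d j ∧ B j - derOp d ^ j ∈ OpLE d (j - 1) ∧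
      L * B j - B j * L ∈ OpLE d (n - 2)) (i : ℕ) : L * Bp L n B i - Bp L n B i * L ∈ OpLE d (n - 2) := by
  rw [Bp]
  by_cases h : n ∣ i
  · rw [if_pos h, ← pow_succ', ← pow_succ, sub_self]
    exact AddSubgroup.zero_mem _
  · rw [if_neg h]
    exact (hB i).2.2

/-- Decomposition of almost-commuting operators over the extended basis, `n ≥ 2`. -/
lemma decomp2 (hB : ∀ j, B j ∈ OpLE d j ∧ B j - derOp d ^ j ∈ OpLE d (j - 1) ∧
      L * B j - B j * L ∈ OpLE d (n - 2)) (hd : IsDeriv d) (hn2 : 2 ≤ n) (hLn : L ∈ OpLE d n)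
    (hnf : L - derOp d ^ n ∈ OpLE d (n - 2)) {x : F} (hx : d x ≠ 0) :
    ∀ m, ∀ A, A ∈ OpLE d m → L * A - A * L ∈ OpLE d (n - 2) →
      ∃ c : ℕ → F, (∀ j, d (c j) = 0) ∧
        A = ∑ i ∈ range (m + 1), mulOp (c i) * Bp L n B i := by
  intro m
  induction m with
  | zero =>
      intro A hA hcomm
      obtain ⟨a, hrep⟩ := (mem_OpLE_iff d).1 hA
      have hval : A = mulOp (a 0) := by
        rw [hrep, sum_range_one, pow_zero, mul_one]
      have hda : d (a 0) = 0 := by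
        refine top_const d L n hd (by omega) hnf hx a ?_ (by omega)
        rw [← hrep]
        exact OpLE_mono d (by omega) hcomm
      refine ⟨fun _ => a 0, fun j => hda, ?_⟩
      rw [sum_range_one, hval]
      have hBp0 : Bp L n B 0 = 1 := by
        rw [Bp, if_pos (dvd_zero n), Nat.zero_div, pow_zero]
      rw [hBp0, mul_one]
  | succ m' ih =>
      intro A hA hcomm
      obtain ⟨a, hrep⟩ := (mem_OpLE_iff d).1 hA
      set α := a (m' + 1) with hα
      have hda : d α = 0 := by
        refine top_const d L n hd (by omega) hnf hx a ?_ (by omega)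
        rw [← hrep]
        exact OpLE_mono d (by omega) hcomm
      set A' := A - mulOp α * Bp L n B (m' + 1) with hA'
      have hA'mem : A' ∈ OpLE d m' := by
        have e : A' = (∑ i ∈ range (m' + 1), mulOp (a i) * derOp d ^ i)
            + (- (mulOp α * (Bp L n B (m' + 1) - derOp d ^ (m' + 1)))) := by
          rw [hA', hrep, sum_range_succ, mul_sub]
          abel
        rw [e]
        refine AddSubgroup.add_mem _ ((mem_OpLE_iff d).2 ⟨a, rfl⟩) (AddSubgroup.neg_mem _ ?_)
        refine mulOp_mul_mem_OpLE d _ ?_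
        have := Bp_monic d L n B hB hd (by omega) hLn hnf (m' + 1)
        simpa using this
      have hA'comm : L * A' - A' * L ∈ OpLE d (n - 2) := by
        have hconst : L * (mulOp α * Bp L n B (m' + 1))
            = mulOp α * (L * Bp L n B (m' + 1)) := by
          rw [← mul_assoc, ← const_comm_OpLE d hd hda hLn, mul_assoc]
        have e : L * A' - A' * L = (L * A - A * L)
            - mulOp α * (L * Bp L n B (m' + 1) - Bp L n B (m' + 1) * L) := by
          rw [hA', mul_sub, sub_mul, hconst, mul_sub]
          rw [← mul_assoc]
          abel
        rw [e]
        exact AddSubgroup.sub_mem _ hcomm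
          (mulOp_mul_mem_OpLE d _ (Bp_comm d L n B hB (m' + 1)))
      obtain ⟨c', hc', hrep'⟩ := ih A' hA'mem hA'comm
      refine ⟨fun i => if i = m' + 1 then α else c' i, ?_, ?_⟩
      · intro j
        show d (if j = m' + 1 then α else c' j) = 0
        split_ifs
        · exact hda
        · exact hc' j
      · have e : ∑ i ∈ range (m' + 2),
            mulOp (if i = m' + 1 then α else c' i) * Bp L n B i
            = (∑ i ∈ range (m' + 1), mulOp (c' i) * Bp L n B i)
              + mulOp α * Bp L n B (m' + 1) := by
          rw [sum_range_succ, if_pos rfl]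
          congr 1
          refine sum_congr rfl fun i hi => ?_
          rw [if_neg (by have := mem_range.1 hi; omega)]
        rw [e, ← hrep']
        rw [hA']
        abel
/-- For a first-order `L` in normal form, the centralizer is `C[L]`. -/
lemma cent_cpoly_one (hd : IsDeriv d) (hL1 : L ∈ OpLE d 1)
    (hnf1 : L - derOp d ^ 1 ∈ OpLE d 0) {x : F} (hx : d x ≠ 0) :
    ∀ m, ∀ A, A ∈ OpLE d m → L * A = A * L → A ∈ CPoly d L := by
  have hLD : ∃ b : F, L = derOp d + mulOp b := by
    obtain ⟨b, hb⟩ := (mem_OpLE_iff d).1 hnf1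
    rw [sum_range_one, pow_zero, mul_one] at hb
    refine ⟨b 0, ?_⟩
    rw [pow_one] at hb
    rw [← sub_add_cancel L (derOp d), hb]
    abel
  intro m
  induction m with
  | zero =>
      intro A hA hcomm
      obtain ⟨a, hrep⟩ := (mem_OpLE_iff d).1 hA
      have hval : A = mulOp (a 0) := by
        rw [hrep, sum_range_one, pow_zero, mul_one]
      obtain ⟨b, hLb⟩ := hLD
      have hda : d (a 0) = 0 := by
        have hz : mulOp (d (a 0)) = 0 := by
          have e : mulOp (d (a 0)) = L * A - A * L := by
            rw [hval, hLb, add_mul, mul_add, ← mulOp_mul, ← mulOp_mul, mul_comm b]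
            have : derOp d * mulOp (a 0) - mulOp (a 0) * derOp d = Ccomm d 1 (a 0) := by
              rw [Ccomm, pow_one]
            rw [← Ccomm_one d hd (a 0), ← this]
            abel
          rw [e, hcomm, sub_self]
        have := congrArg (fun f : AddMonoid.End F => f 1) hz
        simpa using this
      have : A = mulOp (a 0) * L ^ 0 := by rw [pow_zero, mul_one, hval]
      rw [this]
      exact cpoly_monomial d L hda 0
  | succ m' ih =>
      intro A hA hcomm
      obtain ⟨a, hrep⟩ := (mem_OpLE_iff d).1 hA
      set α := a (m' + 1) with hα
      have hda : d α = 0 := by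
        refine top_const d L 1 hd le_rfl hnf1 hx a ?_ (by omega)
        rw [← hrep, hcomm, sub_self]
        exact AddSubgroup.zero_mem _
      set A' := A - mulOp α * L ^ (m' + 1) with hA'
      have hA'mem : A' ∈ OpLE d m' := by
        have e : A' = (∑ i ∈ range (m' + 1), mulOp (a i) * derOp d ^ i)
            + (- (mulOp α * (L ^ (m' + 1) - derOp d ^ (m' + 1)))) := by
          rw [hA', hrep, sum_range_succ, mul_sub]
          abel
        rw [e]
        refine AddSubgroup.add_mem _ ((mem_OpLE_iff d).2 ⟨a, rfl⟩) (AddSubgroup.neg_mem _ ?_)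
        refine mulOp_mul_mem_OpLE d _ ?_
        have := Lpow_sub_Dpow d L 1 hd le_rfl hL1 hnf1 (m' + 1)
        rw [Nat.one_mul] at this
        exact this
      have hA'comm : L * A' = A' * L := by
        have hconst : L * (mulOp α * L ^ (m' + 1)) = (mulOp α * L ^ (m' + 1)) * L := by
          rw [← mul_assoc, ← const_comm_OpLE d hd hda hL1, mul_assoc, ← pow_succ',
            mul_assoc, ← pow_succ]
        rw [hA', mul_sub, sub_mul, hcomm, hconst]
      have hA'cp := ih A' hA'mem hA'comm
      have : A = A' + mulOp α * L ^ (m' + 1) := by rw [hA']; abel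
      rw [this]
      exact cpoly_add d L hA'cp (cpoly_monomial d L hda (m' + 1))

end Infra6
open Finset
section Infra7

variable {F : Type} [Field F] [CharZero F] (d : F →+ F) (L : AddMonoid.End F) (n : ℕ)
  (B : ℕ → AddMonoid.End F)

lemma d_mul_zero (hd : IsDeriv d) {a b : F} (ha : d a = 0) (hb : d b = 0) : d (a * b) = 0 := by
  rw [hd a b, ha, hb, zero_mul, mul_zero, add_zero]

lemma Jset_eq_insert {m : ℕ} (hm : 1 ≤ m) (hnm : ¬ n ∣ m) :
    Jset n m = insert m (Jset n (m - 1)) := by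
  rw [Jset, Jset, Finset.range_add_one, Finset.filter_insert, if_pos hnm,
    show m - 1 + 1 = m from by omega]

lemma not_mem_Jset_pred {m : ℕ} : m ∉ Jset n (m - 1) := by
  intro h
  have h1 := Finset.mem_range.1 (Finset.mem_filter.1 h).1
  have h2 : ¬ n ∣ m := (Finset.mem_filter.1 h).2
  have : m ≠ 0 := by rintro rfl; exact h2 (dvd_zero n)
  omega

lemma mem_Jset {j m : ℕ} (h : j ∈ Jset n m) : j ≤ m ∧ ¬ n ∣ j ∧ 1 ≤ j := by
  obtain ⟨h1, h2⟩ := Finset.mem_filter.1 h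
  have h3 := Finset.mem_range.1 h1
  refine ⟨by omega, h2, ?_⟩
  rcases Nat.eq_zero_or_pos j with rfl | h4
  · exact absurd (dvd_zero n) h2
  · omega

lemma theta_sub (c c' : ℕ → F) (J : Finset ℕ) :
    theta (fun j => c j - c' j) B J = theta c B J - theta c' B J := by
  rw [theta, theta, theta, ← sum_sub_distrib]
  exact sum_congr rfl fun j _ => by rw [mulOp_sub]; exact sub_mul _ _ _

lemma theta_add (c c' : ℕ → F) (J : Finset ℕ) :
    theta (fun j => c j + c' j) B J = theta c B J + theta c' B J := by
  rw [theta, theta, theta, ← sum_add_distrib]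
  exact sum_congr rfl fun j _ => by rw [mulOp_add, add_mul]

lemma theta_smul (α : F) (c : ℕ → F) (J : Finset ℕ) :
    theta (fun j => α * c j) B J = mulOp α * theta c B J := by
  rw [theta, theta, mul_sum]
  exact sum_congr rfl fun j _ => by rw [mulOp_mul, mul_assoc]

lemma theta_congr {c c' : ℕ → F} (J : Finset ℕ) (h : ∀ j ∈ J, c j = c' j) :
    theta c B J = theta c' B J :=
  sum_congr rfl fun j hj => by rw [h j hj]

/-- Splitting off the top term of `theta` over `Jset n m`. -/
lemma theta_split {m : ℕ} (hm : 1 ≤ m) (hnm : ¬ n ∣ m) (c : ℕ → F) :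
    theta c B (Jset n m) = mulOp (c m) * B m + theta c B (Jset n (m - 1)) := by
  rw [theta, Jset_eq_insert n hm hnm, Finset.sum_insert (not_mem_Jset_pred n), theta]

lemma V_pred_subset {m : ℕ} (hm : 1 ≤ m) (hnm : ¬ n ∣ m) {v : ℕ → F}
    (hv : v ∈ VmSet d L B n (m - 1)) : v ∈ VmSet d L B n m := by
  obtain ⟨h1, h2, h3⟩ := hv
  refine ⟨h1, ?_, ?_⟩
  · intro j hj
    refine h2 j fun hj' => hj ?_
    rw [Jset_eq_insert n hm hnm]
    exact Finset.mem_insert_of_mem hj'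
  · rw [theta_split n B hm hnm, h2 m (not_mem_Jset_pred n), mulOp_zero, zero_mul, zero_add]
    exact h3

lemma V_mem_pred {m : ℕ} (hm : 1 ≤ m) (hnm : ¬ n ∣ m) {v : ℕ → F}
    (hv : v ∈ VmSet d L B n m) (h0 : v m = 0) : v ∈ VmSet d L B n (m - 1) := by
  obtain ⟨h1, h2, h3⟩ := hv
  refine ⟨h1, ?_, ?_⟩
  · intro j hj
    by_cases hjm : j = m
    · rw [hjm]; exact h0
    · refine h2 j fun hj' => ?_
      rw [Jset_eq_insert n hm hnm] at hj'
      rcases Finset.mem_insert.1 hj' with h | h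
      · exact hjm h
      · exact hj h
  · rw [theta_split n B hm hnm, h0, mulOp_zero, zero_mul, zero_add] at h3
    exact h3

lemma V_sub {m : ℕ} {v w : ℕ → F} (hv : v ∈ VmSet d L B n m) (hw : w ∈ VmSet d L B n m) :
    (fun j => v j - w j) ∈ VmSet d L B n m := by
  obtain ⟨h1, h2, h3⟩ := hv
  obtain ⟨g1, g2, g3⟩ := hw
  refine ⟨fun j => by show d (v j - w j) = 0; rw [map_sub, h1 j, g1 j, sub_zero],
    fun j hj => by show v j - w j = 0; rw [h2 j hj, g2 j hj, sub_zero], ?_⟩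
  rw [theta_sub]
  exact cent_sub d L h3 g3

lemma V_smul (hd : IsDeriv d) (hLn : L ∈ OpLE d n) {m : ℕ} {α : F} (hα : d α = 0) {v : ℕ → F} (hv : v ∈ VmSet d L B n m) :
    (fun j => α * v j) ∈ VmSet d L B n m := by
  obtain ⟨h1, h2, h3⟩ := hv
  refine ⟨fun j => d_mul_zero d hd hα (h1 j),
    fun j hj => by show α * v j = 0; rw [h2 j hj, mul_zero], ?_⟩
  rw [theta_smul]
  exact cent_const_mul d L n hd hLn hα h3

lemma F_diff {m : ℕ} {c c' : ℕ → F} (hc : c ∈ FmSet d L B n m) (hc' : c' ∈ FmSet d L B n m) :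
    (fun j => c j - c' j) ∈ VmSet d L B n (m - 1) := by
  obtain ⟨h1, h2, h3⟩ := hc
  obtain ⟨g1, g2, g3⟩ := hc'
  refine ⟨fun j => by show d (c j - c' j) = 0; rw [map_sub, h1 j, g1 j, sub_zero],
    fun j hj => by show c j - c' j = 0; rw [h2 j hj, g2 j hj, sub_zero], ?_⟩
  rw [theta_sub]
  have e : theta c B (Jset n (m-1)) - theta c' B (Jset n (m-1))
      = (B m + theta c B (Jset n (m-1))) - (B m + theta c' B (Jset n (m-1))) := by abel
  rw [e]
  exact cent_sub d L h3 g3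

lemma F_add_v {m : ℕ} {c v : ℕ → F} (hc : c ∈ FmSet d L B n m)
    (hv : v ∈ VmSet d L B n (m - 1)) : (fun j => c j + v j) ∈ FmSet d L B n m := by
  obtain ⟨h1, h2, h3⟩ := hc
  obtain ⟨g1, g2, g3⟩ := hv
  refine ⟨fun j => by show d (c j + v j) = 0; rw [map_add, h1 j, g1 j, add_zero],
    fun j hj => by show c j + v j = 0; rw [h2 j hj, g2 j hj, add_zero], ?_⟩
  rw [theta_add]
  have e : B m + (theta c B (Jset n (m-1)) + theta v B (Jset n (m-1)))
      = (B m + theta c B (Jset n (m-1))) + theta v B (Jset n (m-1)) := by abel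
  rw [e]
  exact cent_add d L h3 g3

end Infra7
open Finset
section Infra8

variable {F : Type} [Field F] [CharZero F] (d : F →+ F) (L : AddMonoid.End F) (n : ℕ)
  (B : ℕ → AddMonoid.End F)

lemma cpoly_zero : (0 : AddMonoid.End F) ∈ CPoly d L :=
  (mem_CPoly_iff d L).2 ⟨0, fun _ => 0, fun _ => map_zero d, by simp⟩

lemma FM_core (hd : IsDeriv d) (hn2 : 2 ≤ n) (hLn : L ∈ OpLE d n)
    (hnf : L - derOp d ^ n ∈ OpLE d (n - 2))
    (hB : ∀ j, B j ∈ OpLE d j ∧ B j - derOp d ^ j ∈ OpLE d (j - 1) ∧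
      L * B j - B j * L ∈ OpLE d (n - 2))
    {x : F} (hx : d x ≠ 0) (M : ℕ) (hlev : Level d L M) :
    1 ≤ M ∧ ¬ n ∣ M ∧ ∃ c, c ∈ FmSet d L B n M := by
  obtain ⟨⟨Q, hQc, hQnp, hQord⟩, hmin⟩ := hlev
  have hQmem : Q ∈ OpLE d M := hQord.1
  have hQcomm : L * Q - Q * L ∈ OpLE d (n - 2) := by
    rw [hQc.2, sub_self]; exact AddSubgroup.zero_mem _
  obtain ⟨c, hcconst, hrep⟩ := decomp2 d L n B hB hd hn2 hLn hnf hx M Q hQmem hQcomm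
  set θ := theta c B (Jset n M) with hθ
  set R := ∑ j ∈ (range (M+1)).filter (fun j => n ∣ j), mulOp (c j) * Bp L n B j with hR
  have hsplit : Q = R + θ := by
    have e1 : ∑ i ∈ range (M+1), mulOp (c i) * Bp L n B i
        = (∑ j ∈ (range (M+1)).filter (fun j => n ∣ j), mulOp (c j) * Bp L n B j)
          + ∑ j ∈ (range (M+1)).filter (fun j => ¬ n ∣ j), mulOp (c j) * Bp L n B j :=
      (sum_filter_add_sum_filter_not _ _ _).symm
    have e2 : ∑ j ∈ (range (M+1)).filter (fun j => ¬ n ∣ j), mulOp (c j) * Bp L n B j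
        = θ := by
      rw [hθ, theta, Jset]
      exact sum_congr rfl fun j hj => by rw [Bp, if_neg (mem_filter.1 hj).2]
    rw [hrep, e1, e2, hR]
  have hRcp : R ∈ CPoly d L := by
    rw [hR]
    refine Finset.sum_induction _ (· ∈ CPoly d L) (fun a b ha hb => cpoly_add d L ha hb)
      (cpoly_zero d L) ?_
    intro j hj
    rw [Bp, if_pos (mem_filter.1 hj).2]
    exact cpoly_monomial d L (hcconst j) (j / n)
  have hRcent : R ∈ Cent d L := by
    rw [hR]
    refine Finset.sum_induction _ (· ∈ Cent d L) (fun a b ha hb => cent_add d L ha hb)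
      (cent_zero d L) ?_
    intro j hj
    rw [Bp, if_pos (mem_filter.1 hj).2]
    exact cent_const_mul d L n hd hLn (hcconst j) (Lpow_cent d L n hd hLn _)
  have hθcent : θ ∈ Cent d L := by
    have e : θ = Q - R := by rw [hsplit]; abel
    rw [e]; exact cent_sub d L hQc hRcent
  have hθnp : θ ∉ CPoly d L := fun h => hQnp (hsplit ▸ cpoly_add d L hRcp h)
  have hM1 : 1 ≤ M := by
    by_contra hcon
    have hM0 : M = 0 := by omega
    apply hθnp
    have hJ0 : Jset n 0 = ∅ := by
      refine Finset.eq_empty_of_forall_notMem fun j hj => ?_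
      obtain ⟨hja, hjb⟩ := mem_filter.1 hj
      have : j = 0 := by have := mem_range.1 hja; omega
      exact hjb (this ▸ dvd_zero n)
    have : θ = 0 := by
      rw [hθ, hM0, theta, hJ0, sum_empty]
    rw [this]; exact cpoly_zero d L
  have hcM0 : c M ≠ 0 := by
    intro hc0
    have hQle : Q ∈ OpLE d (M - 1) := by
      rw [hrep, sum_range_succ, hc0, mulOp_zero, zero_mul, add_zero]
      refine AddSubgroup.sum_mem _ fun i hi => ?_
      have hi' : i ≤ M - 1 := by have := mem_range.1 hi; omega
      exact mulOp_mul_mem_OpLE d _ (OpLE_mono d hi' (Bp_mem d L n B hB hd (by omega) hLn i))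
    have := hQord.2 (M-1) hQle
    omega
  have hndvd : ¬ n ∣ M := by
    intro hdvd
    have hθle : θ ∈ OpLE d (M - 1) := by
      rw [hθ, theta]
      refine AddSubgroup.sum_mem _ fun j hj => ?_
      obtain ⟨hj1, hj2, hj3⟩ := mem_Jset n hj
      have hjM : j ≤ M - 1 := by
        rcases Nat.lt_or_ge j M with h | h
        · omega
        · exfalso
          have : j = M := by omega
          exact hj2 (this ▸ hdvd)
      exact mulOp_mul_mem_OpLE d _ (OpLE_mono d hjM ((hB j).1))
    obtain ⟨q, hq⟩ := exists_hasOrd d hθcent.1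
    have h1 := hq.2 (M-1) hθle
    have h2 := hmin θ hθcent hθnp q hq
    omega
  have hinv : d ((c M)⁻¹) = 0 := d_inv d hd hcM0 (hcconst M)
  refine ⟨hM1, hndvd, fun j => if j ∈ Jset n (M-1) then (c M)⁻¹ * c j else 0, ?_, ?_, ?_⟩
  · intro j
    show d (if j ∈ Jset n (M-1) then (c M)⁻¹ * c j else 0) = 0
    split_ifs
    · exact d_mul_zero d hd hinv (hcconst j)
    · exact map_zero d
  · intro j hj
    show (if j ∈ Jset n (M-1) then (c M)⁻¹ * c j else 0) = 0
    rw [if_neg hj]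
  · have e1 : theta (fun j => if j ∈ Jset n (M-1) then (c M)⁻¹ * c j else 0) B (Jset n (M-1))
        = theta (fun j => (c M)⁻¹ * c j) B (Jset n (M-1)) := by
      refine theta_congr B _ fun j hj => ?_
      show (if j ∈ Jset n (M-1) then (c M)⁻¹ * c j else 0) = (c M)⁻¹ * c j
      rw [if_pos hj]
    have e2 : B M + theta (fun j => if j ∈ Jset n (M-1) then (c M)⁻¹ * c j else 0) B
        (Jset n (M-1)) = mulOp ((c M)⁻¹) * θ := by
      rw [e1, theta_smul, hθ, theta_split n B hM1 hndvd c, mul_add, ← mul_assoc, ← mulOp_mul,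
        inv_mul_cancel₀ hcM0, mulOp_one, one_mul]
    rw [e2]
    exact cent_const_mul d L n hd hLn hinv hθcent

lemma V_pred_triv (hd : IsDeriv d) (hn2 : 2 ≤ n) (hLn : L ∈ OpLE d n)
    (hnf : L - derOp d ^ n ∈ OpLE d (n - 2))
    (hB : ∀ j, B j ∈ OpLE d j ∧ B j - derOp d ^ j ∈ OpLE d (j - 1) ∧
      L * B j - B j * L ∈ OpLE d (n - 2))
    {x : F} (hx : d x ≠ 0) (M : ℕ) (hlev : Level d L M) (hM1 : 1 ≤ M)
    {ξ : ℕ → F} (hξ : ξ ∈ VmSet d L B n (M - 1)) : ∀ j, ξ j = 0 := by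
  by_contra hcon
  push_neg at hcon
  obtain ⟨j1, hj1⟩ := hcon
  obtain ⟨h1, h2, h3⟩ := hξ
  have hj1J : j1 ∈ Jset n (M-1) := by
    by_contra hc; exact hj1 (h2 j1 hc)
  set s := (Jset n (M-1)).filter (fun j => ξ j ≠ 0) with hs
  have hsne : s.Nonempty := ⟨j1, mem_filter.2 ⟨hj1J, hj1⟩⟩
  set j0 := s.max' hsne with hj0
  have hj0mem : j0 ∈ s := s.max'_mem hsne
  have hj0J : j0 ∈ Jset n (M-1) := (mem_filter.1 hj0mem).1
  have hξj0 : ξ j0 ≠ 0 := (mem_filter.1 hj0mem).2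
  obtain ⟨hj0le, hj0nd, hj0pos⟩ := mem_Jset n hj0J
  have hle : ∀ j ∈ Jset n (M-1), ξ j ≠ 0 → j ≤ j0 := fun j hj hj' =>
    s.le_max' j (mem_filter.2 ⟨hj, hj'⟩)
  set θξ := theta ξ B (Jset n (M-1)) with hθξ
  have hup : θξ ∈ OpLE d j0 := by
    rw [hθξ, theta]
    refine AddSubgroup.sum_mem _ fun j hj => ?_
    by_cases hz : ξ j = 0
    · rw [hz, mulOp_zero, zero_mul]; exact AddSubgroup.zero_mem _
    · exact mulOp_mul_mem_OpLE d _ (OpLE_mono d (hle j hj hz) ((hB j).1))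
  have hmon : θξ - mulOp (ξ j0) * derOp d ^ j0 ∈ OpLE d (j0 - 1) := by
    have e : θξ - mulOp (ξ j0) * derOp d ^ j0
        = (∑ j ∈ Jset n (M-1) \ {j0}, mulOp (ξ j) * B j)
          + mulOp (ξ j0) * (B j0 - derOp d ^ j0) := by
      rw [hθξ, theta, Finset.sum_eq_sum_sdiff_singleton_add hj0J
        (fun j => mulOp (ξ j) * B j), mul_sub]
      abel
    rw [e]
    refine AddSubgroup.add_mem _ (AddSubgroup.sum_mem _ fun j hj => ?_)
      (mulOp_mul_mem_OpLE d _ ((hB j0).2.1))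
    obtain ⟨hjJ, hjne⟩ := Finset.mem_sdiff.1 hj
    have hjne' : j ≠ j0 := by simpa using hjne
    by_cases hz : ξ j = 0
    · rw [hz, mulOp_zero, zero_mul]; exact AddSubgroup.zero_mem _
    · have hjle : j ≤ j0 - 1 := by have := hle j hjJ hz; omega
      exact mulOp_mul_mem_OpLE d _ (OpLE_mono d hjle ((hB j).1))
  have hnot : θξ ∉ OpLE d (j0 - 1) := by
    intro hcon2
    have hmem : mulOp (ξ j0) * derOp d ^ j0 ∈ OpLE d (j0 - 1) := by
      have e : mulOp (ξ j0) * derOp d ^ j0 = θξ - (θξ - mulOp (ξ j0) * derOp d ^ j0) := by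
        abel
      rw [e]; exact AddSubgroup.sub_mem _ hcon2 hmon
    exact hξj0 (top_zero d hd hx hj0pos hmem)
  have hnp : θξ ∉ CPoly d L := fun hcp =>
    hj0nd (cpoly_order d L n hd (by omega) hLn hnf hx hcp hup hnot hj0pos)
  obtain ⟨q, hq⟩ := exists_hasOrd d h3.1
  have hqle := hq.2 j0 hup
  have hqM := hlev.2 θξ h3 hnp q hq
  omega

end Infra8
/-- If `M` is the level of `L`, then `F_M` is a single point `{c_M}` and
`V_M` is the line spanned by `(c_M, 1)`.  More generally, for `m` not divisible by `n`,
either `F_m = ∅` or `F_m = {c_m} + V_{m−1}` is an affine space over `V_{m−1}`, and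
`V_m = V_{m−1} ⊕ T_m` with `dim T_m ≤ 1`. -/
theorem flag_of_constants {F : Type} [Field F] [CharZero F]
    (d : F →+ F) (hd : IsDeriv d) (L : AddMonoid.End F) (n : ℕ) (hn : 1 ≤ n)
    (hL : MonicOrd d L n)
    (hnf : L - derOp d ^ n ∈ OpLE d (n - 2))
    (B : ℕ → AddMonoid.End F)
    (hB : ∀ j, B j ∈ OpLE d j ∧ B j - derOp d ^ j ∈ OpLE d (j - 1) ∧
      L * B j - B j * L ∈ OpLE d (n - 2))
    (M : ℕ) (hlev : Level d L M) :
    (∃ c : ℕ → F, FmSet d L B n M = {c}) ∧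
    (∀ c : ℕ → F, FmSet d L B n M = {c} →
       VmSet d L B n M =
         {v | ∃ α : F, d α = 0 ∧ v = fun j => if j = M then α else α * c j}) ∧
    (∀ m : ℕ, 1 ≤ m → ¬ (n ∣ m) →
      (FmSet d L B n m = ∅ ∨ ∃ c ∈ FmSet d L B n m,
         FmSet d L B n m =
           {c' | ∃ v ∈ VmSet d L B n (m - 1), c' = fun j => c j + v j}) ∧
      (VmSet d L B n m = VmSet d L B n (m - 1) ∨
       ∃ t ∈ VmSet d L B n m, t ∉ VmSet d L B n (m - 1) ∧
         ∀ v ∈ VmSet d L B n m, ∃ α : F, d α = 0 ∧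
           (fun j => v j - α * t j) ∈ VmSet d L B n (m - 1))) := by
  have hLn : L ∈ OpLE d n := hL.1.1
  obtain ⟨x, hx⟩ := exists_dx d hn hLn hL.1.2
  rcases Nat.lt_or_ge n 2 with hn1 | hn2
  · -- `n = 1` contradicts the existence of the level
    exfalso
    have hn1' : n = 1 := by omega
    subst hn1'
    obtain ⟨⟨Q, hQc, hQnp, hQord⟩, hmin⟩ := hlev
    obtain ⟨k, hk⟩ := hQc.1
    exact hQnp (cent_cpoly_one d L hd hLn hnf hx k Q hk hQc.2)
  · obtain ⟨hM1, hndvd, c₀, hc₀⟩ := FM_core d L n B hd hn2 hLn hnf hB hx M hlev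
    have hVtriv : ∀ {ξ : ℕ → F}, ξ ∈ VmSet d L B n (M - 1) → ∀ j, ξ j = 0 :=
      fun {ξ} hξ => V_pred_triv d L n B hd hn2 hLn hnf hB hx M hlev hM1 hξ
    have huniq : ∀ c c' : ℕ → F, c ∈ FmSet d L B n M → c' ∈ FmSet d L B n M → c = c' := by
      intro c c' hc hc'
      funext j
      have hdiff := F_diff d L n B hc hc'
      have h0 : c j - c' j = 0 := hVtriv hdiff j
      exact sub_eq_zero.1 h0
    refine ⟨⟨c₀, Set.eq_singleton_iff_unique_mem.2 ⟨hc₀, fun c hc => huniq c c₀ hc hc₀⟩⟩,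
      ?_, ?_⟩
    · -- description of V_M
      intro c hc
      have hcF : c ∈ FmSet d L B n M := by
        have : c ∈ ({c} : Set (ℕ → F)) := rfl
        rwa [← hc] at this
      apply Set.ext
      intro v
      constructor
      · intro hv
        obtain ⟨hv1, hv2, hv3⟩ := hv
        by_cases hα0 : v M = 0
        · have hvpred := V_mem_pred d L n B hM1 hndvd ⟨hv1, hv2, hv3⟩ hα0
          have hv0 := hVtriv hvpred
          refine ⟨0, map_zero d, ?_⟩
          funext j
          rw [hv0 j]
          by_cases h : j = M
          · rw [if_pos h]
          · rw [if_neg h, zero_mul]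
        · have hαconst : d (v M) = 0 := hv1 M
          have hαinv : d (v M)⁻¹ = 0 := d_inv d hd hα0 hαconst
          have hccF : (fun j => if j ∈ Jset n (M-1) then (v M)⁻¹ * v j else 0)
              ∈ FmSet d L B n M := by
            refine ⟨?_, ?_, ?_⟩
            · intro j
              show d (if j ∈ Jset n (M-1) then (v M)⁻¹ * v j else 0) = 0
              split_ifs
              · exact d_mul_zero d hd hαinv (hv1 j)
              · exact map_zero d
            · intro j hj
              show (if j ∈ Jset n (M-1) then (v M)⁻¹ * v j else 0) = 0
              rw [if_neg hj]
            · have e1 : theta (fun j => if j ∈ Jset n (M-1) then (v M)⁻¹ * v j else 0) B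
                  (Jset n (M-1)) = theta (fun j => (v M)⁻¹ * v j) B (Jset n (M-1)) := by
                refine theta_congr B _ fun j hj => ?_
                show (if j ∈ Jset n (M-1) then (v M)⁻¹ * v j else 0) = (v M)⁻¹ * v j
                rw [if_pos hj]
              have e2 : B M + theta (fun j => if j ∈ Jset n (M-1) then (v M)⁻¹ * v j else 0)
                  B (Jset n (M-1)) = mulOp ((v M)⁻¹) * theta v B (Jset n M) := by
                rw [e1, theta_smul, theta_split n B hM1 hndvd v, mul_add, ← mul_assoc,
                  ← mulOp_mul, inv_mul_cancel₀ hα0, mulOp_one, one_mul]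
              rw [e2]
              exact cent_const_mul d L n hd hLn hαinv hv3
          have hceq := huniq _ c hccF hcF
          refine ⟨v M, hαconst, ?_⟩
          funext j
          by_cases hjM : j = M
          · rw [if_pos hjM, hjM]
          · rw [if_neg hjM]
            by_cases hjJ : j ∈ Jset n (M-1)
            · have h1 : (if j ∈ Jset n (M-1) then (v M)⁻¹ * v j else 0) = c j :=
                congrFun hceq j
              rw [if_pos hjJ] at h1
              rw [← h1, ← mul_assoc, mul_inv_cancel₀ hα0, one_mul]
            · have hvj : v j = 0 := by
                refine hv2 j fun hmem => ?_
                rw [Jset_eq_insert n hM1 hndvd] at hmem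
                rcases Finset.mem_insert.1 hmem with h | h
                · exact hjM h
                · exact hjJ h
              rw [hvj, hcF.2.1 j hjJ, mul_zero]
      · rintro ⟨α, hαc, rfl⟩
        refine ⟨?_, ?_, ?_⟩
        · intro j
          show d (if j = M then α else α * c j) = 0
          split_ifs
          · exact hαc
          · exact d_mul_zero d hd hαc (hcF.1 j)
        · intro j hj
          show (if j = M then α else α * c j) = 0
          have hjM : j ≠ M := by
            rintro rfl
            exact hj (by
              rw [Jset_eq_insert n hM1 hndvd]
              exact Finset.mem_insert_self j _)
          rw [if_neg hjM]
          have hjJ : j ∉ Jset n (M-1) := fun h => hj (by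
            rw [Jset_eq_insert n hM1 hndvd]
            exact Finset.mem_insert_of_mem h)
          rw [hcF.2.1 j hjJ, mul_zero]
        · have h2 : theta (fun j => if j = M then α else α * c j) B (Jset n (M-1))
              = theta (fun j => α * c j) B (Jset n (M-1)) := by
            refine theta_congr B _ fun j hj => ?_
            show (if j = M then α else α * c j) = α * c j
            rw [if_neg (fun h => not_mem_Jset_pred n (h ▸ hj))]
          have e : theta (fun j => if j = M then α else α * c j) B (Jset n M)
              = mulOp α * (B M + theta c B (Jset n (M-1))) := by
            rw [theta_split n B hM1 hndvd, if_pos rfl, h2, theta_smul, mul_add]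
          rw [e]
          exact cent_const_mul d L n hd hLn hαc hcF.2.2
    · -- the general flag statement
      intro m hm hnm
      constructor
      · by_cases hF : FmSet d L B n m = ∅
        · exact Or.inl hF
        · right
          obtain ⟨c₁, hc₁⟩ := Set.nonempty_iff_ne_empty.2 hF
          refine ⟨c₁, hc₁, ?_⟩
          apply Set.ext
          intro c'
          constructor
          · intro hc'
            refine ⟨fun j => c' j - c₁ j, F_diff d L n B hc' hc₁, ?_⟩
            funext j
            ring
          · rintro ⟨v, hv, rfl⟩
            exact F_add_v d L n B hc₁ hv
      · by_cases hall : ∀ t ∈ VmSet d L B n m, t m = 0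
        · left
          apply Set.ext
          intro v
          constructor
          · intro hv
            exact V_mem_pred d L n B hm hnm hv (hall v hv)
          · intro hv
            exact V_pred_subset d L n B hm hnm hv
        · right
          push_neg at hall
          obtain ⟨t, ht, htm⟩ := hall
          refine ⟨t, ht, ?_, ?_⟩
          · intro hpred
            exact htm (hpred.2.1 m (not_mem_Jset_pred n))
          · intro v hv
            have htconst : d (t m) = 0 := ht.1 m
            have hvconst : d (v m) = 0 := hv.1 m
            have htinv : d (t m)⁻¹ = 0 := d_inv d hd htm htconst
            have hαc : d (v m * (t m)⁻¹) = 0 := d_mul_zero d hd hvconst htinv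
            refine ⟨v m * (t m)⁻¹, hαc, ?_⟩
            have hsc : (fun j => (v m * (t m)⁻¹) * t j) ∈ VmSet d L B n m :=
              V_smul d L n B hd hLn hαc ht
            have hsub := V_sub d L n B hv hsc
            refine V_mem_pred d L n B hm hnm hsub ?_
            show v m - (v m * (t m)⁻¹) * t m = 0
            rw [mul_assoc, inv_mul_cancel₀ htm, mul_one, sub_self]
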